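/- In the RBM setting with N >= 1 visible variables and N_H >= 0 hidden variables, the marginal (visible) RBM model P satisfies | LREP(P) - A | <= N_H * log 2, where A = max_{x in {-1,1}^N} max_{h in {-1,1}^{N_H}} f(x,h) - min_{x in {-1,1}^N} max_{h in {-1,1}^{N_H}} f(x,h). (Proposition 2(i)) -/

import Mathlib

/-- ±1 encoding of a Boolean spin. -/
noncomputable def sgn (b : Bool) : ℝ := if b then 1 else -1

/-- The RBM linear function `f(x,h)` of visible outcomes `x` and hidden outcomes `h`. -/
noncomputable def rbmF {N NH : ℕ} (θV : Fin N → ℝ) (θH : Fin NH → ℝ)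
    (θVH : Fin N → Fin NH → ℝ) (x : Fin N → Bool) (h : Fin NH → Bool) : ℝ :=
  (∑ i, sgn (x i) * θV i) + (∑ j, sgn (h j) * θH j) +
    ∑ i, ∑ j, sgn (x i) * sgn (h j) * θVH i j

/-- The joint RBM model on pairs `(x,h)`. -/
noncomputable def rbmJoint {N NH : ℕ} (θV : Fin N → ℝ) (θH : Fin NH → ℝ)
    (θVH : Fin N → Fin NH → ℝ) (p : (Fin N → Bool) × (Fin NH → Bool)) : ℝ :=
  Real.exp (rbmF θV θH θVH p.1 p.2) /
    ∑ q : (Fin N → Bool) × (Fin NH → Bool), Real.exp (rbmF θV θH θVH q.1 q.2)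

/-- The marginal (visible) RBM model. -/
noncomputable def rbmMarginal {N NH : ℕ} (θV : Fin N → ℝ) (θH : Fin NH → ℝ)
    (θVH : Fin N → Fin NH → ℝ) (x : Fin N → Bool) : ℝ :=
  ∑ h : Fin NH → Bool, rbmJoint θV θH θVH (x, h)

/-- `A = max_x max_h f(x,h) - min_x max_h f(x,h)`. -/
noncomputable def rbmA {N NH : ℕ} (θV : Fin N → ℝ) (θH : Fin NH → ℝ)
    (θVH : Fin N → Fin NH → ℝ) : ℝ :=
  (Finset.univ.sup' Finset.univ_nonempty fun x : Fin N → Bool =>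
      Finset.univ.sup' Finset.univ_nonempty fun h : Fin NH → Bool => rbmF θV θH θVH x h) -
    (Finset.univ.inf' Finset.univ_nonempty fun x : Fin N → Bool =>
      Finset.univ.sup' Finset.univ_nonempty fun h : Fin NH → Bool => rbmF θV θH θVH x h)

/-- `k(h) = ∑_i |θV_i + ∑_j h_j θVH_{ij}|`. -/
noncomputable def rbmk {N NH : ℕ} (θV : Fin N → ℝ) (θVH : Fin N → Fin NH → ℝ)
    (h : Fin NH → Bool) : ℝ :=
  ∑ i, |θV i + ∑ j, sgn (h j) * θVH i j|

/-- `B = max_h k(h)`. -/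
noncomputable def rbmB {N NH : ℕ} (θV : Fin N → ℝ) (θVH : Fin N → Fin NH → ℝ) : ℝ :=
  Finset.univ.sup' Finset.univ_nonempty (rbmk θV θVH)

/-- The log-ratio of extremal probabilities of a positive function on a finite nonempty type. -/
noncomputable def LREP {S : Type*} [Fintype S] [Nonempty S] (P : S → ℝ) : ℝ :=
  Real.log (Finset.univ.sup' Finset.univ_nonempty P / Finset.univ.inf' Finset.univ_nonempty P)

/-- Proposition 2(i): the marginal RBM model satisfies `|LREP(P) - A| ≤ N_H * log 2`. -/
theorem prop2_i {N NH : ℕ} (hN : 1 ≤ N) (θV : Fin N → ℝ) (θH : Fin NH → ℝ)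
    (θVH : Fin N → Fin NH → ℝ) :
    |LREP (rbmMarginal θV θH θVH) - rbmA θV θH θVH| ≤ (NH : ℝ) * Real.log 2 := by
  classical
  set Z : ℝ := ∑ q : (Fin N → Bool) × (Fin NH → Bool), Real.exp (rbmF θV θH θVH q.1 q.2)
    with hZdef
  have hZpos : 0 < Z := Finset.sum_pos (fun q _ => Real.exp_pos _) Finset.univ_nonempty
  set g : (Fin N → Bool) → ℝ := fun x => ∑ h : Fin NH → Bool, Real.exp (rbmF θV θH θVH x h)
    with hgdef
  set M : (Fin N → Bool) → ℝ :=
    fun x => Finset.univ.sup' Finset.univ_nonempty fun h : Fin NH → Bool => rbmF θV θH θVH x h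
    with hMdef
  have hPg : rbmMarginal θV θH θVH = fun x => g x / Z := by
    funext x
    simp [rbmMarginal, rbmJoint, hgdef, hZdef, Finset.sum_div]
  have hgpos : ∀ x, 0 < g x :=
    fun x => Finset.sum_pos (fun _ _ => Real.exp_pos _) Finset.univ_nonempty
  -- pointwise bounds
  have hlow : ∀ x, Real.exp (M x) ≤ g x := by
    intro x
    obtain ⟨h0, -, hh0⟩ :=
      Finset.exists_mem_eq_sup' (Finset.univ_nonempty (α := Fin NH → Bool))
        (fun h => rbmF θV θH θVH x h)
    rw [hMdef]
    simp only [hh0]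
    exact Finset.single_le_sum (fun h _ => (Real.exp_pos _).le) (Finset.mem_univ h0)
  have hhigh : ∀ x, g x ≤ (2 : ℝ) ^ NH * Real.exp (M x) := by
    intro x
    calc g x ≤ ∑ _h : Fin NH → Bool, Real.exp (M x) := by
          refine Finset.sum_le_sum fun h _ => ?_
          exact Real.exp_le_exp.2 (Finset.le_sup' _ (Finset.mem_univ h))
      _ = (2 : ℝ) ^ NH * Real.exp (M x) := by
          rw [Finset.sum_const, nsmul_eq_mul]
          norm_num [Finset.card_univ]
  -- sup/inf bounds
  have hsupM : Real.exp (Finset.univ.sup' Finset.univ_nonempty M) ≤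
      Finset.univ.sup' Finset.univ_nonempty g := by
    obtain ⟨x0, -, hx0⟩ :=
      Finset.exists_mem_eq_sup' (Finset.univ_nonempty (α := Fin N → Bool)) M
    rw [hx0]
    exact (hlow x0).trans (Finset.le_sup' _ (Finset.mem_univ x0))
  have hsupM' : Finset.univ.sup' Finset.univ_nonempty g ≤
      (2 : ℝ) ^ NH * Real.exp (Finset.univ.sup' Finset.univ_nonempty M) := by
    refine Finset.sup'_le _ _ fun x _ => (hhigh x).trans ?_
    have : M x ≤ Finset.univ.sup' Finset.univ_nonempty M :=
      Finset.le_sup' _ (Finset.mem_univ x)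
    have := Real.exp_le_exp.2 this
    nlinarith [pow_pos (show (0:ℝ) < 2 by norm_num) NH]
  have hinfM : Real.exp (Finset.univ.inf' Finset.univ_nonempty M) ≤
      Finset.univ.inf' Finset.univ_nonempty g := by
    refine Finset.le_inf' _ _ fun x _ => ?_
    refine le_trans (Real.exp_le_exp.2 ?_) (hlow x)
    exact Finset.inf'_le _ (Finset.mem_univ x)
  have hinfM' : Finset.univ.inf' Finset.univ_nonempty g ≤
      (2 : ℝ) ^ NH * Real.exp (Finset.univ.inf' Finset.univ_nonempty M) := by
    obtain ⟨x0, -, hx0⟩ :=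
      Finset.exists_mem_eq_inf' (Finset.univ_nonempty (α := Fin N → Bool)) M
    rw [hx0]
    exact (Finset.inf'_le _ (Finset.mem_univ x0)).trans (hhigh x0)
  have hsupg_pos : 0 < Finset.univ.sup' Finset.univ_nonempty g :=
    lt_of_lt_of_le (Real.exp_pos _) hsupM
  have hinfg_pos : 0 < Finset.univ.inf' Finset.univ_nonempty g :=
    lt_of_lt_of_le (Real.exp_pos _) hinfM
  -- LREP simplification
  have hsupP : Finset.univ.sup' Finset.univ_nonempty (rbmMarginal θV θH θVH) =
      (Finset.univ.sup' Finset.univ_nonempty g) / Z := by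
    rw [hPg]
    exact (Finset.comp_sup'_eq_sup'_comp _ (fun y : ℝ => y / Z)
      (fun a b => (max_div_div_right hZpos.le a b).symm) (f := g)).symm
  have hinfP : Finset.univ.inf' Finset.univ_nonempty (rbmMarginal θV θH θVH) =
      (Finset.univ.inf' Finset.univ_nonempty g) / Z := by
    rw [hPg]
    exact (Finset.apply_inf'_eq_inf'_comp _ (fun y : ℝ => y / Z)
      (fun a b => (min_div_div_right hZpos.le a b).symm) (f := g)).symm
  have hLREP : LREP (rbmMarginal θV θH θVH) =
      Real.log (Finset.univ.sup' Finset.univ_nonempty g) -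
        Real.log (Finset.univ.inf' Finset.univ_nonempty g) := by
    rw [LREP, hsupP, hinfP]
    rw [show (Finset.univ.sup' Finset.univ_nonempty g / Z) /
        (Finset.univ.inf' Finset.univ_nonempty g / Z) =
        Finset.univ.sup' Finset.univ_nonempty g / Finset.univ.inf' Finset.univ_nonempty g by
      field_simp]
    exact Real.log_div hsupg_pos.ne' hinfg_pos.ne'
  -- log bounds
  have log2pow : Real.log ((2 : ℝ) ^ NH) = (NH : ℝ) * Real.log 2 := by
    rw [Real.log_pow]
  have h1 : Finset.univ.sup' Finset.univ_nonempty M ≤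
      Real.log (Finset.univ.sup' Finset.univ_nonempty g) :=
    (Real.le_log_iff_exp_le hsupg_pos).2 hsupM
  have h2 : Real.log (Finset.univ.sup' Finset.univ_nonempty g) ≤
      Finset.univ.sup' Finset.univ_nonempty M + (NH : ℝ) * Real.log 2 := by
    calc Real.log (Finset.univ.sup' Finset.univ_nonempty g)
        ≤ Real.log ((2 : ℝ) ^ NH * Real.exp (Finset.univ.sup' Finset.univ_nonempty M)) :=
          Real.log_le_log hsupg_pos hsupM'
      _ = Finset.univ.sup' Finset.univ_nonempty M + (NH : ℝ) * Real.log 2 := by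
          rw [Real.log_mul (by positivity) (Real.exp_pos _).ne', log2pow, Real.log_exp]
          ring
  have h3 : Finset.univ.inf' Finset.univ_nonempty M ≤
      Real.log (Finset.univ.inf' Finset.univ_nonempty g) :=
    (Real.le_log_iff_exp_le hinfg_pos).2 hinfM
  have h4 : Real.log (Finset.univ.inf' Finset.univ_nonempty g) ≤
      Finset.univ.inf' Finset.univ_nonempty M + (NH : ℝ) * Real.log 2 := by
    calc Real.log (Finset.univ.inf' Finset.univ_nonempty g)
        ≤ Real.log ((2 : ℝ) ^ NH * Real.exp (Finset.univ.inf' Finset.univ_nonempty M)) :=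
          Real.log_le_log hinfg_pos hinfM'
      _ = Finset.univ.inf' Finset.univ_nonempty M + (NH : ℝ) * Real.log 2 := by
          rw [Real.log_mul (by positivity) (Real.exp_pos _).ne', log2pow, Real.log_exp]
          ring
  have hA : rbmA θV θH θVH =
      Finset.univ.sup' Finset.univ_nonempty M - Finset.univ.inf' Finset.univ_nonempty M := rfl
  rw [hLREP, hA, abs_sub_le_iff]
  constructor <;> linarith
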